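/- Suppose A is an n×n complex matrix, S, Π are differentiable matrix-valued functions on an interval with Π' = AΠq_1 + Πq_0 and S' = Π q_1 j Π*, where q_1 = [[0,0],[I_h,0]], q_0(x) = -[[0,I_h],[u(x),0]] with u(x)=u(x)*, and j = [[0,I_h],[-I_h,0]]. If the identity A S(0) - S(0) A* = Π(0) j Π(0)* holds at x = 0, then A S(x) - S(x) A* = Π(x) j Π(x)* for all x. -/

import Mathlib

open Matrix

/-- if `Π' = AΠq₁ + Πq₀`, `S' = Πq₁jΠ*` and the matrix identity
`A S(0) - S(0) A* = Π(0) j Π(0)*` holds at `x = 0`, then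
`A S(x) - S(x) A* = Π(x) j Π(x)*` for all `x`. -/
theorem stmt_3 (n h : ℕ)
    (A : Matrix (Fin n) (Fin n) ℂ)
    (u : ℝ → Matrix (Fin h) (Fin h) ℂ) (hu : ∀ x, (u x)ᴴ = u x)
    (hucont : ∀ i j, Continuous fun x => u x i j)
    (q1 j : Matrix (Fin h ⊕ Fin h) (Fin h ⊕ Fin h) ℂ)
    (q0 : ℝ → Matrix (Fin h ⊕ Fin h) (Fin h ⊕ Fin h) ℂ)
    (hq1 : q1 = Matrix.fromBlocks 0 0 1 0)
    (hq0 : ∀ x, q0 x = -(Matrix.fromBlocks 0 1 (u x) 0))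
    (hj : j = Matrix.fromBlocks 0 1 (-1) 0)
    (Pi : ℝ → Matrix (Fin n) (Fin h ⊕ Fin h) ℂ)
    (S : ℝ → Matrix (Fin n) (Fin n) ℂ)
    (hPi : ∀ x i p, HasDerivAt (fun y => Pi y i p)
      ((A * Pi x * q1 + Pi x * q0 x) i p) x)
    (hS : ∀ x i p, HasDerivAt (fun y => S y i p)
      ((Pi x * q1 * j * (Pi x)ᴴ) i p) x)
    (hid0 : A * S 0 - S 0 * Aᴴ = Pi 0 * j * (Pi 0)ᴴ) :
    ∀ x, A * S x - S x * Aᴴ = Pi x * j * (Pi x)ᴴ := by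
  -- structural identities
  have hq1j : q1 * j = -(j * q1ᴴ) := by
    subst hq1 hj
    simp [Matrix.fromBlocks_multiply, Matrix.fromBlocks_conjTranspose,
      Matrix.fromBlocks_neg, Matrix.fromBlocks_inj]
  have hq0j : ∀ x, q0 x * j = -(j * (q0 x)ᴴ) := by
    intro x
    rw [hq0 x, hj]
    simp [Matrix.fromBlocks_multiply, Matrix.fromBlocks_conjTranspose, hu x,
      Matrix.fromBlocks_neg, Matrix.fromBlocks_inj, Matrix.conjTranspose_neg,
      Matrix.neg_mul, Matrix.mul_neg]
  set P' : ℝ → Matrix (Fin n) (Fin h ⊕ Fin h) ℂ := fun x => A * Pi x * q1 + Pi x * q0 x with hP'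
  -- algebraic identity for derivatives
  have halg : ∀ x, A * (Pi x * q1 * j * (Pi x)ᴴ) - (Pi x * q1 * j * (Pi x)ᴴ) * Aᴴ
      = P' x * j * (Pi x)ᴴ + Pi x * j * (P' x)ᴴ := by
    intro x
    have hjq1 : j * q1ᴴ = -(q1 * j) := by rw [hq1j, neg_neg]
    have hjq0 : j * (q0 x)ᴴ = -(q0 x * j) := by rw [hq0j x, neg_neg]
    have e1 : Pi x * j * q1ᴴ = -(Pi x * q1 * j) := by
      rw [Matrix.mul_assoc (Pi x) j q1ᴴ, hjq1, Matrix.mul_neg, Matrix.mul_assoc]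
    have e2 : Pi x * j * (q0 x)ᴴ = -(Pi x * q0 x * j) := by
      rw [Matrix.mul_assoc (Pi x) j (q0 x)ᴴ, hjq0, Matrix.mul_neg, Matrix.mul_assoc]
    simp only [hP', conjTranspose_add, conjTranspose_mul, Matrix.add_mul, Matrix.mul_add,
      ← Matrix.mul_assoc]
    rw [e1, e2]
    simp only [Matrix.neg_mul]
    abel
  -- entrywise derivative of the defect
  have key : ∀ x (i : Fin n) (p : Fin n), HasDerivAt
      (fun y => (A * S y) i p - (S y * Aᴴ) i p - (Pi y * j * (Pi y)ᴴ) i p) 0 x := by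
    intro x i p
    have hAS : HasDerivAt (fun y => (A * S y) i p)
        ((A * (Pi x * q1 * j * (Pi x)ᴴ)) i p) x := by
      simp only [Matrix.mul_apply]
      exact HasDerivAt.fun_sum fun k _ => (hS x k p).const_mul (A i k)
    have hSA : HasDerivAt (fun y => (S y * Aᴴ) i p)
        (((Pi x * q1 * j * (Pi x)ᴴ) * Aᴴ) i p) x := by
      simp only [Matrix.mul_apply]
      exact HasDerivAt.fun_sum fun k _ => (hS x i k).mul_const (Aᴴ k p)
    have hPjP : HasDerivAt (fun y => (Pi y * j * (Pi y)ᴴ) i p)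
        ((P' x * j * (Pi x)ᴴ + Pi x * j * (P' x)ᴴ) i p) x := by
      have : ∀ b, HasDerivAt (fun y => (Pi y * j) i b * star (Pi y p b))
          ((P' x * j) i b * star (Pi x p b) + (Pi x * j) i b * star (P' x p b)) x := by
        intro b
        have hg : HasDerivAt (fun y => (Pi y * j) i b) ((P' x * j) i b) x := by
          simp only [Matrix.mul_apply]
          exact HasDerivAt.fun_sum fun a _ => (hPi x i a).mul_const (j a b)
        have hst : HasDerivAt (fun y => star (Pi y p b)) (star (P' x p b)) x :=
          (hPi x p b).star
        exact hg.mul hst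
      have hfun : (fun y => (Pi y * j * (Pi y)ᴴ) i p)
          = fun y => ∑ b, (Pi y * j) i b * star (Pi y p b) := by
        funext y
        simp [Matrix.mul_apply, Matrix.conjTranspose_apply]
      have hder : (P' x * j * (Pi x)ᴴ + Pi x * j * (P' x)ᴴ) i p
          = ∑ b, ((P' x * j) i b * star (Pi x p b) + (Pi x * j) i b * star (P' x p b)) := by
        simp [Matrix.mul_apply, Matrix.conjTranspose_apply, Finset.sum_add_distrib]
      rw [hfun, hder]
      exact HasDerivAt.fun_sum fun b _ => this b
    have := (hAS.fun_sub hSA).fun_sub hPjP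
    refine this.congr_deriv ?_
    rw [← halg x]
    simp [Matrix.sub_apply]
  intro x
  ext i p
  have hconst : (A * S x) i p - (S x * Aᴴ) i p - (Pi x * j * (Pi x)ᴴ) i p
      = (A * S 0) i p - (S 0 * Aᴴ) i p - (Pi 0 * j * (Pi 0)ᴴ) i p :=
    is_const_of_deriv_eq_zero (fun z => (key z i p).differentiableAt)
      (fun z => (key z i p).deriv) x 0
  have h0 : (A * S 0) i p - (S 0 * Aᴴ) i p - (Pi 0 * j * (Pi 0)ᴴ) i p = 0 := by
    have := congrFun (congrFun hid0 i) p
    simp only [Matrix.sub_apply] at this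
    linear_combination this
  rw [h0] at hconst
  simp only [Matrix.sub_apply]
  linear_combination hconst
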